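/- Let a ∈ ℂ, a ≠ 0, and let V be the Mathieu Fourier coefficients. For every integer n ≥ 3 and every z ∈ ℂ with |z| ≤ 1, one has S_{n+1}^{21}(n,z) = S_{n−1}^{21}(n,z) · Φ(n,z). -/
import Mathlib


open Complex

/-- Extended walk: `extWalk b e k j i` equals `b` for `i = 0`, `j (i-1)` for `1 ≤ i ≤ k`,
and `e` for `i > k`. -/
def extWalk (b e : ℤ) (k : ℕ) (j : Fin k → ℤ) : ℕ → ℤ := fun i =>
  if h : 1 ≤ i ∧ i ≤ k then j ⟨i - 1, by omega⟩ else if i = 0 then b else e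

/-- Generic term of the sums `S_k^{ij}(n,z)`: for a `k`-tuple `j` of integers avoiding `±n`,
the value `V(j₁ - b) V(j₂ - j₁) ⋯ V(j_k - j_{k-1}) V(e - j_k) / ∏_s (n² - j_s² + z)`. -/
noncomputable def Sterm (V : ℤ → ℂ) (n : ℕ) (z : ℂ) (b e : ℤ) (k : ℕ)
    (j : Fin k → {m : ℤ // m ≠ (n : ℤ) ∧ m ≠ -(n : ℤ)}) : ℂ :=
  (∏ i ∈ Finset.range (k + 1),
      V (extWalk b e k (fun s => (j s : ℤ)) (i + 1) - extWalk b e k (fun s => (j s : ℤ)) i)) /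
    ∏ s : Fin k, ((n : ℂ) ^ 2 - ((j s : ℤ) : ℂ) ^ 2 + z)

/-- The Mathieu Fourier coefficients: `V(2) = V(-2) = a` and `V(m) = 0` for `m ≠ ±2`. -/
noncomputable def mathieuV (a : ℂ) : ℤ → ℂ := fun m => if m = 2 ∨ m = -2 then a else 0

/-- `S_k^{21}(n,z)` for the Mathieu potential (for `k = 0` it equals `V(2n)`). -/
noncomputable def S21 (a : ℂ) (n : ℕ) (z : ℂ) (k : ℕ) : ℂ :=
  ∑' j : Fin k → {m : ℤ // m ≠ (n : ℤ) ∧ m ≠ -(n : ℤ)},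
    Sterm (mathieuV a) n z (-(n : ℤ)) (n : ℤ) k j

/-- `Φ(n,z) = ∑_{k=2}^{n-1} a² / ((n²-(-n+2k)²+z)(n²-(-n+2k-2)²+z))`. -/
noncomputable def PhiC (a : ℂ) (n : ℕ) (z : ℂ) : ℂ :=
  ∑ k ∈ Finset.Icc 2 (n - 1),
    a ^ 2 / (((n : ℂ) ^ 2 - (-(n : ℂ) + 2 * (k : ℂ)) ^ 2 + z) *
      ((n : ℂ) ^ 2 - (-(n : ℂ) + 2 * (k : ℂ) - 2) ^ 2 + z))

lemma extWalk_zero' (b e : ℤ) (k : ℕ) (j : Fin k → ℤ) : extWalk b e k j 0 = b := by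
  simp [extWalk]

lemma extWalk_top' (b e : ℤ) (k : ℕ) (j : Fin k → ℤ) (i : ℕ) (h : k < i) :
    extWalk b e k j i = e := by
  unfold extWalk
  rw [dif_neg (by omega), if_neg (by omega)]

lemma extWalk_mid' (b e : ℤ) (k : ℕ) (j : Fin k → ℤ) (i : ℕ) (h1 : 1 ≤ i) (h2 : i ≤ k) :
    extWalk b e k j i = j ⟨i - 1, by omega⟩ := by
  unfold extWalk
  rw [dif_pos ⟨h1, h2⟩]

lemma mathieuV_ne {a : ℂ} {m : ℤ} (h : mathieuV a m ≠ 0) : m = 2 ∨ m = -2 := by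
  by_contra hc
  exact h (by simp [mathieuV, hc])

lemma mathieuV_pm {a : ℂ} {m : ℤ} (h : m = 2 ∨ m = -2) : mathieuV a m = a := by
  simp [mathieuV, h]

lemma sterm_steps {a : ℂ} {n : ℕ} {z : ℂ} {k : ℕ}
    {j : Fin k → {m : ℤ // m ≠ (n : ℤ) ∧ m ≠ -(n : ℤ)}}
    (h : Sterm (mathieuV a) n z (-(n : ℤ)) (n : ℤ) k j ≠ 0) :
    ∀ i ∈ Finset.range (k + 1),
      extWalk (-(n : ℤ)) (n : ℤ) k (fun s => (j s : ℤ)) (i + 1)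
          - extWalk (-(n : ℤ)) (n : ℤ) k (fun s => (j s : ℤ)) i = 2 ∨
      extWalk (-(n : ℤ)) (n : ℤ) k (fun s => (j s : ℤ)) (i + 1)
          - extWalk (-(n : ℤ)) (n : ℤ) k (fun s => (j s : ℤ)) i = -2 := by
  intro i hi
  have hnum : (∏ i ∈ Finset.range (k + 1),
      mathieuV a (extWalk (-(n : ℤ)) (n : ℤ) k (fun s => (j s : ℤ)) (i + 1)
        - extWalk (-(n : ℤ)) (n : ℤ) k (fun s => (j s : ℤ)) i)) ≠ 0 := by
    intro h0
    exact h (by simp [Sterm, h0])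
  exact mathieuV_ne (Finset.prod_ne_zero_iff.mp hnum i hi)

lemma sterm_sum_steps (n : ℕ) (k : ℕ) (j : Fin k → ℤ) :
    ∑ i ∈ Finset.range (k + 1),
      (extWalk (-(n : ℤ)) (n : ℤ) k j (i + 1) - extWalk (-(n : ℤ)) (n : ℤ) k j i) = 2 * n := by
  rw [Finset.sum_range_sub (extWalk (-(n : ℤ)) (n : ℤ) k j)]
  rw [extWalk_top' _ _ _ _ _ (by omega), extWalk_zero']
  ring

lemma count_lemma (d : ℕ → ℤ) (M : ℕ)
    (hd : ∀ i ∈ Finset.range M, d i = 2 ∨ d i = -2) :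
    ∑ i ∈ Finset.range M, d i
      = 2 * M - 4 * ((Finset.range M).filter (fun i => d i = -2)).card := by
  classical
  rw [← Finset.sum_filter_add_sum_filter_not (Finset.range M) (fun i => d i = -2)]
  have h1 : ∑ i ∈ (Finset.range M).filter (fun i => d i = -2), d i
      = -2 * (((Finset.range M).filter (fun i => d i = -2)).card : ℤ) := by
    rw [Finset.sum_congr rfl (fun i hi => (Finset.mem_filter.mp hi).2), Finset.sum_const]
    simp [mul_comm]
  have h2 : ∑ i ∈ (Finset.range M).filter (fun i => ¬ d i = -2), d i
      = 2 * (((Finset.range M).filter (fun i => ¬ d i = -2)).card : ℤ) := by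
    have he : ∀ i ∈ (Finset.range M).filter (fun i => ¬ d i = -2), d i = 2 := by
      intro i hi
      have hm := Finset.mem_filter.mp hi
      rcases hd i hm.1 with h | h
      · exact h
      · exact absurd h hm.2
    rw [Finset.sum_congr rfl he, Finset.sum_const]
    simp [mul_comm]
  have h3 : ((Finset.range M).filter (fun i => d i = -2)).card
      + ((Finset.range M).filter (fun i => ¬ d i = -2)).card = M := by
    rw [Finset.card_filter_add_card_filter_not, Finset.card_range]
  rw [h1, h2]
  omega

noncomputable def wup (n : ℕ) (hn : 3 ≤ n) : Fin (n - 1) → {m : ℤ // m ≠ (n : ℤ) ∧ m ≠ -(n : ℤ)} :=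
  fun s => ⟨-(n : ℤ) + 2 * (s.1 + 1), by
    have hs := s.2
    constructor <;> intro h <;> omega⟩

noncomputable def wt (n : ℕ) (hn : 3 ≤ n) (t : ℕ) :
    Fin (n + 1) → {m : ℤ // m ≠ (n : ℤ) ∧ m ≠ -(n : ℤ)} :=
  fun s => if h : 2 ≤ t ∧ t ≤ n - 1 then
    ⟨if s.1 + 1 ≤ t then -(n : ℤ) + 2 * (s.1 + 1) else -(n : ℤ) + 2 * (s.1 + 1) - 4, by
      have hs := s.2
      constructor <;> (split_ifs with h2 <;> intro hc <;> omega)⟩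
  else ⟨0, by constructor <;> intro h <;> omega⟩

lemma classify_low {a : ℂ} {n : ℕ} (hn : 3 ≤ n) {z : ℂ}
    {j : Fin (n - 1) → {m : ℤ // m ≠ (n : ℤ) ∧ m ≠ -(n : ℤ)}}
    (h : Sterm (mathieuV a) n z (-(n : ℤ)) (n : ℤ) (n - 1) j ≠ 0) :
    j = wup n hn := by
  set P := extWalk (-(n : ℤ)) (n : ℤ) (n - 1) (fun s => (j s : ℤ)) with hPdef
  have hsteps := sterm_steps h
  have hsum := sterm_sum_steps n (n - 1) (fun s => (j s : ℤ))
  have hcount := count_lemma (fun i => P (i + 1) - P i) (n - 1 + 1) hsteps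
  rw [hcount] at hsum
  have hM : (n - 1 + 1 : ℕ) = n := by omega
  have hc0 : ((Finset.range (n - 1 + 1)).filter (fun i => P (i + 1) - P i = -2)).card = 0 := by
    set c := ((Finset.range (n - 1 + 1)).filter (fun i => P (i + 1) - P i = -2)).card with hc
    omega
  have hall : ∀ i ∈ Finset.range (n - 1 + 1), P (i + 1) - P i = 2 := by
    intro i hi
    rcases hsteps i hi with h2 | h2
    · exact h2
    · exfalso
      have : i ∈ (Finset.range (n - 1 + 1)).filter (fun i => P (i + 1) - P i = -2) :=
        Finset.mem_filter.mpr ⟨hi, h2⟩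
      rw [Finset.card_eq_zero.mp hc0] at this
      exact absurd this (Finset.notMem_empty i)
  have hpos : ∀ i, i ≤ n - 1 + 1 → P i = -(n : ℤ) + 2 * i := by
    intro i
    induction i with
    | zero => intro _; simp [hPdef, extWalk_zero']
    | succ i ih =>
      intro hi
      have hstep := hall i (Finset.mem_range.mpr (by omega))
      have := ih (by omega)
      push_cast
      push_cast at this
      omega
  funext s
  apply Subtype.ext
  have h1 : (j s : ℤ) = P (s.1 + 1) := by
    rw [hPdef, extWalk_mid' _ _ _ _ (s.1 + 1) (by omega) (by omega)]
    congr 1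
  rw [h1, hpos (s.1 + 1) (by omega)]
  simp only [wup]
  push_cast
  ring

lemma classify_high {a : ℂ} {n : ℕ} (hn : 3 ≤ n) {z : ℂ}
    {j : Fin (n + 1) → {m : ℤ // m ≠ (n : ℤ) ∧ m ≠ -(n : ℤ)}}
    (h : Sterm (mathieuV a) n z (-(n : ℤ)) (n : ℤ) (n + 1) j ≠ 0) :
    ∃ t ∈ Finset.Icc 2 (n - 1), j = wt n hn t := by
  set P := extWalk (-(n : ℤ)) (n : ℤ) (n + 1) (fun s => (j s : ℤ)) with hPdef
  have hsteps := sterm_steps h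
  have hsum := sterm_sum_steps n (n + 1) (fun s => (j s : ℤ))
  have hcount := count_lemma (fun i => P (i + 1) - P i) (n + 1 + 1) hsteps
  rw [hcount] at hsum
  set c := ((Finset.range (n + 1 + 1)).filter (fun i => P (i + 1) - P i = -2)).card with hc
  have hc1 : c = 1 := by omega
  obtain ⟨t, hts⟩ := Finset.card_eq_one.mp hc1
  have htmem : t ∈ (Finset.range (n + 1 + 1)).filter (fun i => P (i + 1) - P i = -2) := by
    rw [hts]; exact Finset.mem_singleton_self t
  have htlt : t < n + 1 + 1 := Finset.mem_range.mp (Finset.mem_filter.mp htmem).1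
  have htd : P (t + 1) - P t = -2 := (Finset.mem_filter.mp htmem).2
  have hother : ∀ i ∈ Finset.range (n + 1 + 1), i ≠ t → P (i + 1) - P i = 2 := by
    intro i hi hit
    rcases hsteps i hi with h2 | h2
    · exact h2
    · exfalso
      have : i ∈ (Finset.range (n + 1 + 1)).filter (fun i => P (i + 1) - P i = -2) :=
        Finset.mem_filter.mpr ⟨hi, h2⟩
      rw [hts] at this
      exact hit (Finset.mem_singleton.mp this)
  have hpos : ∀ i, i ≤ n + 1 + 1 → P i = -(n : ℤ) + 2 * i - (if t < i then 4 else 0) := by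
    intro i
    induction i with
    | zero => intro _; simp [hPdef, extWalk_zero']
    | succ i ih =>
      intro hi
      have hih := ih (by omega)
      by_cases hit : i = t
      · have hd : P (i + 1) = P i + -2 := by rw [← htd, hit]; ring
        rw [hd, hih]
        split_ifs <;> push_cast <;> omega
      · have hd : P (i + 1) = P i + 2 := by
          have := hother i (Finset.mem_range.mpr (by omega)) hit
          omega
        rw [hd, hih]
        split_ifs <;> push_cast <;> omega
  have hne : ∀ i, 1 ≤ i → i ≤ n + 1 → P i ≠ (n : ℤ) ∧ P i ≠ -(n : ℤ) := by
    intro i h1 h2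
    rw [hPdef, extWalk_mid' _ _ _ _ i h1 h2]
    exact (j ⟨i - 1, by omega⟩).2
  have ht2 : 2 ≤ t := by
    by_contra hcon
    have h2 : P 2 = -(n : ℤ) := by
      rw [hpos 2 (by omega)]
      rw [if_pos (by omega)]
      push_cast
      ring
    exact (hne 2 (by omega) (by omega)).2 h2
  have htn : t ≤ n - 1 := by
    by_contra hcon
    have h2 : P n = (n : ℤ) := by
      rw [hpos n (by omega)]
      rw [if_neg (by omega)]
      push_cast
      ring
    exact (hne n (by omega) (by omega)).1 h2
  refine ⟨t, Finset.mem_Icc.mpr ⟨ht2, htn⟩, ?_⟩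
  funext s
  apply Subtype.ext
  have h1 : (j s : ℤ) = P (s.1 + 1) := by
    rw [hPdef, extWalk_mid' _ _ _ _ (s.1 + 1) (by omega) (by omega)]
    congr 1
  rw [h1, hpos (s.1 + 1) (by omega)]
  simp only [wt, dif_pos (⟨ht2, htn⟩ : 2 ≤ t ∧ t ≤ n - 1)]
  split_ifs with hle hlt hlt <;> push_cast <;> omega

lemma prod_split (f : ℕ → ℂ) (n t : ℕ) (hn : 3 ≤ n) (h2 : 2 ≤ t) (h1 : t ≤ n - 1) :
    ∏ s ∈ Finset.range (n + 1), (if s + 1 ≤ t then f s else f (s - 2))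
      = f (t - 2) * f (t - 1) * ∏ s ∈ Finset.range (n - 1), f s := by
  rw [← Finset.prod_range_mul_prod_Ico _ (show t ≤ n + 1 by omega)]
  have e1 : ∏ s ∈ Finset.range t, (if s + 1 ≤ t then f s else f (s - 2))
      = ∏ s ∈ Finset.range t, f s := by
    refine Finset.prod_congr rfl fun s hs => ?_
    rw [if_pos (by have := Finset.mem_range.mp hs; omega)]
  have e2 : ∏ s ∈ Finset.Ico t (n + 1), (if s + 1 ≤ t then f s else f (s - 2))
      = ∏ s ∈ Finset.Ico (t - 2) (n - 1), f s := by
    rw [Finset.prod_congr rfl (g := fun s => f (s - 2)) fun s hs => by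
      rw [if_neg (by have := Finset.mem_Ico.mp hs; omega)]]
    rw [Finset.prod_Ico_eq_prod_range, Finset.prod_Ico_eq_prod_range]
    rw [show n + 1 - t = n - 1 - (t - 2) by omega]
    exact Finset.prod_congr rfl fun i _ => by congr 1; omega
  rw [e1, e2]
  have e3 : ∏ s ∈ Finset.range t, f s
      = (∏ s ∈ Finset.range (t - 2), f s) * (f (t - 2) * f (t - 1)) := by
    rw [← Finset.prod_range_mul_prod_Ico f (show t - 2 ≤ t by omega)]
    congr 1
    rw [Finset.prod_Ico_eq_prod_range, show t - (t - 2) = 2 by omega]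
    rw [Finset.prod_range_succ, Finset.prod_range_one]
    congr 2 <;> omega
  rw [e3]
  have e4 : (∏ s ∈ Finset.range (t - 2), f s) * ∏ s ∈ Finset.Ico (t - 2) (n - 1), f s
      = ∏ s ∈ Finset.range (n - 1), f s :=
    Finset.prod_range_mul_prod_Ico f (by omega)
  calc (∏ s ∈ Finset.range (t - 2), f s) * (f (t - 2) * f (t - 1))
        * ∏ s ∈ Finset.Ico (t - 2) (n - 1), f s
      = f (t - 2) * f (t - 1) * ((∏ s ∈ Finset.range (t - 2), f s)
        * ∏ s ∈ Finset.Ico (t - 2) (n - 1), f s) := by ring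
    _ = _ := by rw [e4]

lemma walkpos_wup (n : ℕ) (hn : 3 ≤ n) :
    ∀ i ≤ n - 1 + 1,
      extWalk (-(n : ℤ)) (n : ℤ) (n - 1) (fun s => ((wup n hn s : ℤ))) i = -(n : ℤ) + 2 * i := by
  intro i hi
  rcases Nat.eq_zero_or_pos i with h0 | h0
  · subst h0; rw [extWalk_zero']; push_cast; ring
  rcases Nat.lt_or_ge i (n - 1 + 1) with hlt | hge
  · rw [extWalk_mid' _ _ _ _ i h0 (by omega)]
    simp only [wup]
    push_cast
    omega
  · rw [extWalk_top' _ _ _ _ i (by omega)]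
    have : i = n := by omega
    subst this
    push_cast
    ring

lemma walkpos_wt (n : ℕ) (hn : 3 ≤ n) (t : ℕ) (h2 : 2 ≤ t) (h1 : t ≤ n - 1) :
    ∀ i ≤ n + 1 + 1,
      extWalk (-(n : ℤ)) (n : ℤ) (n + 1) (fun s => ((wt n hn t s : ℤ))) i
        = -(n : ℤ) + 2 * i - (if t < i then 4 else 0) := by
  intro i hi
  rcases Nat.eq_zero_or_pos i with h0 | h0
  · subst h0; rw [extWalk_zero', if_neg (by omega)]; push_cast; ring
  rcases Nat.lt_or_ge i (n + 1 + 1) with hlt | hge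
  · rw [extWalk_mid' _ _ _ _ i h0 (by omega)]
    simp only [wt, dif_pos (⟨h2, h1⟩ : 2 ≤ t ∧ t ≤ n - 1)]
    split_ifs with ha hb hb <;> push_cast <;> omega
  · rw [extWalk_top' _ _ _ _ i (by omega)]
    have : i = n + 2 := by omega
    subst this
    rw [if_pos (by omega)]
    push_cast
    ring

lemma sterm_wup (a : ℂ) (n : ℕ) (hn : 3 ≤ n) (z : ℂ) :
    Sterm (mathieuV a) n z (-(n : ℤ)) (n : ℤ) (n - 1) (wup n hn)
      = a ^ n / ∏ s ∈ Finset.range (n - 1), ((n : ℂ) ^ 2 - (-(n : ℂ) + 2 * (s + 1)) ^ 2 + z) := by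
  unfold Sterm
  congr 1
  · have hnum : ∀ i ∈ Finset.range (n - 1 + 1),
        mathieuV a (extWalk (-(n : ℤ)) (n : ℤ) (n - 1) (fun s => ((wup n hn s : ℤ))) (i + 1)
          - extWalk (-(n : ℤ)) (n : ℤ) (n - 1) (fun s => ((wup n hn s : ℤ))) i) = a := by
      intro i hi
      have hm := Finset.mem_range.mp hi
      rw [walkpos_wup n hn (i + 1) (by omega), walkpos_wup n hn i (by omega)]
      apply mathieuV_pm
      left
      push_cast
      ring
    rw [Finset.prod_congr rfl hnum, Finset.prod_const, Finset.card_range]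
    congr 1
    omega
  · calc ∏ s : Fin (n - 1), ((n : ℂ) ^ 2 - (((wup n hn s : ℤ)) : ℂ) ^ 2 + z)
        = ∏ s : Fin (n - 1), ((n : ℂ) ^ 2 - (-(n : ℂ) + 2 * ((s.1 : ℂ) + 1)) ^ 2 + z) := by
          refine Finset.prod_congr rfl fun s _ => ?_
          simp only [wup]
          push_cast
          ring
      _ = _ := Fin.prod_univ_eq_prod_range
          (fun i => (n : ℂ) ^ 2 - (-(n : ℂ) + 2 * ((i : ℂ) + 1)) ^ 2 + z) (n - 1)

lemma sterm_wt (a : ℂ) (n : ℕ) (hn : 3 ≤ n) (z : ℂ) (t : ℕ) (h2 : 2 ≤ t) (h1 : t ≤ n - 1) :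
    Sterm (mathieuV a) n z (-(n : ℤ)) (n : ℤ) (n + 1) (wt n hn t)
      = a ^ (n + 1 + 1) /
        (((n : ℂ) ^ 2 - (-(n : ℂ) + 2 * (t : ℂ) - 2) ^ 2 + z)
          * ((n : ℂ) ^ 2 - (-(n : ℂ) + 2 * (t : ℂ)) ^ 2 + z)
          * ∏ s ∈ Finset.range (n - 1), ((n : ℂ) ^ 2 - (-(n : ℂ) + 2 * ((s : ℂ) + 1)) ^ 2 + z)) := by
  unfold Sterm
  congr 1
  · have hnum : ∀ i ∈ Finset.range (n + 1 + 1),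
        mathieuV a (extWalk (-(n : ℤ)) (n : ℤ) (n + 1) (fun s => ((wt n hn t s : ℤ))) (i + 1)
          - extWalk (-(n : ℤ)) (n : ℤ) (n + 1) (fun s => ((wt n hn t s : ℤ))) i) = a := by
      intro i hi
      have hm := Finset.mem_range.mp hi
      rw [walkpos_wt n hn t h2 h1 (i + 1) (by omega), walkpos_wt n hn t h2 h1 i (by omega)]
      apply mathieuV_pm
      split_ifs <;> push_cast <;> omega
    rw [Finset.prod_congr rfl hnum, Finset.prod_const, Finset.card_range]
  · have hden : ∏ s : Fin (n + 1), ((n : ℂ) ^ 2 - (((wt n hn t s : ℤ)) : ℂ) ^ 2 + z)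
        = ∏ s ∈ Finset.range (n + 1),
            (if s + 1 ≤ t
              then ((n : ℂ) ^ 2 - (-(n : ℂ) + 2 * ((s : ℂ) + 1)) ^ 2 + z)
              else ((n : ℂ) ^ 2 - (-(n : ℂ) + 2 * (((s - 2 : ℕ) : ℂ) + 1)) ^ 2 + z)) := by
      rw [← Fin.prod_univ_eq_prod_range]
      refine Finset.prod_congr rfl fun s _ => ?_
      simp only [wt, dif_pos (⟨h2, h1⟩ : 2 ≤ t ∧ t ≤ n - 1)]
      split_ifs with ha
      · push_cast; ring
      · rw [Nat.cast_sub (show 2 ≤ s.1 by omega)]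
        push_cast
        ring
    rw [hden]
    rw [prod_split (fun s => (n : ℂ) ^ 2 - (-(n : ℂ) + 2 * ((s : ℂ) + 1)) ^ 2 + z) n t hn h2 h1]
    congr 2
    · rw [Nat.cast_sub (show 2 ≤ t by omega)]
      push_cast
      ring
    · rw [Nat.cast_sub (show 1 ≤ t by omega)]
      push_cast
      ring

lemma wt_ne (n : ℕ) (hn : 3 ≤ n) {x y : ℕ} (hx2 : 2 ≤ x) (hx1 : x ≤ n - 1)
    (hy2 : 2 ≤ y) (hy1 : y ≤ n - 1) (hxy : x < y) : wt n hn x ≠ wt n hn y := by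
  intro heq
  have h := congrFun heq ⟨x, by omega⟩
  rw [Subtype.ext_iff] at h
  simp only [wt, dif_pos (⟨hx2, hx1⟩ : 2 ≤ x ∧ x ≤ n - 1),
    dif_pos (⟨hy2, hy1⟩ : 2 ≤ y ∧ y ≤ n - 1)] at h
  rw [if_neg (by omega), if_pos (by omega)] at h
  omega


/-- For the Mathieu potential, `S_{n+1}^{21}(n,z) = S_{n-1}^{21}(n,z) · Φ(n,z)`. -/
theorem mathieu_stmt_15 (a : ℂ) (ha : a ≠ 0) (n : ℕ) (hn : 3 ≤ n) (z : ℂ) (hz : ‖z‖ ≤ 1) :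
    S21 a n z (n + 1) = S21 a n z (n - 1) * PhiC a n z := by
  classical
  set D := ∏ s ∈ Finset.range (n - 1), ((n : ℂ) ^ 2 - (-(n : ℂ) + 2 * ((s : ℂ) + 1)) ^ 2 + z)
    with hD
  have hlow : S21 a n z (n - 1) = a ^ n / D := by
    unfold S21
    rw [tsum_eq_single (wup n hn) (fun j hj => by
      by_contra hne
      exact hj (classify_low hn hne))]
    exact sterm_wup a n hn z
  have hhigh : S21 a n z (n + 1)
      = ∑ t ∈ Finset.Icc 2 (n - 1),
          a ^ (n + 1 + 1) /
            (((n : ℂ) ^ 2 - (-(n : ℂ) + 2 * (t : ℂ) - 2) ^ 2 + z)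
              * ((n : ℂ) ^ 2 - (-(n : ℂ) + 2 * (t : ℂ)) ^ 2 + z) * D) := by
    unfold S21
    rw [tsum_eq_sum (s := (Finset.Icc 2 (n - 1)).image (wt n hn)) (fun j hj => by
      by_contra hne
      obtain ⟨t, ht, rfl⟩ := classify_high hn hne
      exact hj (Finset.mem_image_of_mem _ ht))]
    rw [Finset.sum_image (fun x hx y hy hxy => by
      by_contra hne
      have hx' := Finset.mem_Icc.mp hx
      have hy' := Finset.mem_Icc.mp hy
      rcases Nat.lt_or_ge x y with hlt | hge
      · exact wt_ne n hn hx'.1 hx'.2 hy'.1 hy'.2 hlt hxy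
      · exact wt_ne n hn hy'.1 hy'.2 hx'.1 hx'.2 (by omega) hxy.symm)]
    exact Finset.sum_congr rfl fun t ht => by
      have ht' := Finset.mem_Icc.mp ht
      rw [sterm_wt a n hn z t ht'.1 ht'.2]
  rw [hhigh, hlow]
  unfold PhiC
  rw [Finset.mul_sum]
  refine Finset.sum_congr rfl fun t ht => ?_
  set E := (n : ℂ) ^ 2 - (-(n : ℂ) + 2 * (t : ℂ)) ^ 2 + z with hE
  set F := (n : ℂ) ^ 2 - (-(n : ℂ) + 2 * (t : ℂ) - 2) ^ 2 + z with hF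
  calc a ^ (n + 1 + 1) / (F * E * D) = (a ^ n * a ^ 2) / (D * (E * F)) := by
        rw [show F * E * D = D * (E * F) by ring, show a ^ (n + 1 + 1) = a ^ n * a ^ 2 by ring]
    _ = a ^ n / D * (a ^ 2 / (E * F)) := (div_mul_div_comm _ _ _ _).symm
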